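/- Let U be a complex Banach space and Φ = (φ, v) a finite-dimensional evolution in U (the linear span U_Φ of {φ^t v : t ≥ 0} is finite-dimensional) that is stable. Then the limit x̄ = lim_{t→∞} (1/t) ∑_{m=1}^t φ^m v exists, x̄ is a fixed point of φ (φ x̄ = x̄), and if λ = 1 is not an eigenvalue of the restriction of φ to U_Φ, then x̄ = 0. -/

import Mathlib

set_option maxHeartbeats 1000000


open Filter Finset

/-- For a stable finite-dimensional evolution `(φ, v)` in a complex Banach
space, the limit `x̄` of the state averages exists, is a fixed point of `φ`, and vanishes
whenever `λ = 1` is not an eigenvalue of the restriction of `φ` to the evolution space. -/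
theorem meanErgodic_limit_of_stable_finiteDimensional
    {U : Type*} [NormedAddCommGroup U] [NormedSpace ℂ U] [CompleteSpace U]
    (φ : U →L[ℂ] U) (v : U)
    (hfd : FiniteDimensional ℂ (Submodule.span ℂ (Set.range fun t : ℕ => (φ ^ t) v)))
    (hstable : ∃ c : ℝ, ∀ t : ℕ, ‖(φ ^ t) v‖ ≤ c * ‖v‖) :
    ∃ xbar : U,
      Tendsto (fun t : ℕ => (t : ℝ)⁻¹ • ∑ m ∈ Finset.Icc 1 t, (φ ^ m) v) atTop (nhds xbar) ∧
      φ xbar = xbar ∧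
      ((¬ ∃ x ∈ Submodule.span ℂ (Set.range fun t : ℕ => (φ ^ t) v), x ≠ 0 ∧ φ x = x) →
        xbar = 0) := by
  classical
  set V := Submodule.span ℂ (Set.range fun t : ℕ => (φ ^ t) v) with hVdef
  obtain ⟨c, hc⟩ := hstable
  -- every element of V has bounded orbit
  have hb : ∀ w : U, w ∈ V → ∃ C : ℝ, ∀ t : ℕ, ‖(φ ^ t) w‖ ≤ C := by
    intro w hw
    induction hw using Submodule.span_induction with
    | mem x hx =>
      obtain ⟨s, rfl⟩ := hx
      refine ⟨c * ‖v‖, fun t => ?_⟩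
      rw [← ContinuousLinearMap.mul_apply, ← pow_add]
      exact hc (t + s)
    | zero => exact ⟨0, fun t => by simp⟩
    | add x y _ _ hx hy =>
      obtain ⟨C1, h1⟩ := hx; obtain ⟨C2, h2⟩ := hy
      refine ⟨C1 + C2, fun t => ?_⟩
      calc ‖(φ ^ t) (x + y)‖ = ‖(φ ^ t) x + (φ ^ t) y‖ := by rw [map_add]
        _ ≤ ‖(φ ^ t) x‖ + ‖(φ ^ t) y‖ := norm_add_le _ _
        _ ≤ C1 + C2 := add_le_add (h1 t) (h2 t)
    | smul a x _ hx =>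
      obtain ⟨C1, h1⟩ := hx
      refine ⟨‖a‖ * C1, fun t => ?_⟩
      rw [map_smul, norm_smul]
      exact mul_le_mul_of_nonneg_left (h1 t) (norm_nonneg a)
  -- V is invariant under φ
  have hmap : ∀ w ∈ V, φ w ∈ V := by
    intro w hw
    induction hw using Submodule.span_induction with
    | mem x hx =>
      obtain ⟨s, rfl⟩ := hx
      refine Submodule.subset_span ⟨s + 1, ?_⟩
      show (φ ^ (s + 1)) v = φ ((φ ^ s) v)
      rw [pow_succ', ContinuousLinearMap.mul_apply]
    | zero => simpa using V.zero_mem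
    | add x y _ _ hx hy => rw [map_add]; exact V.add_mem hx hy
    | smul a x _ hx => rw [map_smul]; exact V.smul_mem a hx
  haveI : FiniteDimensional ℂ V := hfd
  let ψ : V →ₗ[ℂ] V := (φ : U →ₗ[ℂ] U).restrict hmap
  have hψcoe : ∀ w : V, ((ψ w : V) : U) = φ (w : U) := fun w => rfl
  have hψpow : ∀ (t : ℕ) (w : V), (((ψ ^ t) w : V) : U) = (φ ^ t) (w : U) := by
    intro t
    induction t with
    | zero => intro w; simp
    | succ n ih =>
      intro w
      rw [pow_succ, Module.End.mul_apply, ih, hψcoe, ← ContinuousLinearMap.mul_apply,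
        ← pow_succ]
  -- the kernel and range of ψ - 1 intersect trivially
  have hinf : LinearMap.ker (ψ - LinearMap.id) ⊓ LinearMap.range (ψ - LinearMap.id) = ⊥ := by
    rw [Submodule.eq_bot_iff]
    intro x hx
    obtain ⟨hxK, hxR⟩ := Submodule.mem_inf.mp hx
    obtain ⟨y, hy⟩ := hxR
    have hfix : ψ x = x := by
      have h := LinearMap.mem_ker.mp hxK
      rw [LinearMap.sub_apply, LinearMap.id_apply, sub_eq_zero] at h
      exact h
    have hy' : ψ y = x + y := by
      rw [LinearMap.sub_apply, LinearMap.id_apply] at hy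
      rw [← hy]; abel
    have key : ∀ n : ℕ, (ψ ^ n) y = y + n • x := by
      intro n; induction n with
      | zero => simp
      | succ n ih =>
        rw [pow_succ', Module.End.mul_apply, ih, map_add, map_nsmul, hfix, hy', succ_nsmul]
        abel
    obtain ⟨C, hC⟩ := hb (y : U) y.2
    have hnorm : ∀ n : ℕ, (n : ℝ) * ‖(x : U)‖ ≤ C + ‖(y : U)‖ := by
      intro n
      have h2 := hC n
      rw [← hψpow n y, key n] at h2
      have h3 : ‖(y : U) + n • (x : U)‖ ≤ C := by
        simpa using h2
      have h4 : ‖n • (x : U)‖ ≤ C + ‖(y : U)‖ := by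
        calc ‖n • (x : U)‖ = ‖((y : U) + n • (x : U)) + (-(y : U))‖ := by congr 1; abel
          _ ≤ ‖(y : U) + n • (x : U)‖ + ‖-(y : U)‖ := norm_add_le _ _
          _ ≤ C + ‖(y : U)‖ := by rw [norm_neg]; exact add_le_add_left h3 _
      calc (n : ℝ) * ‖(x : U)‖ = ‖(n : ℝ) • (x : U)‖ := by
            rw [norm_smul, Real.norm_natCast]
        _ = ‖n • (x : U)‖ := by rw [Nat.cast_smul_eq_nsmul]
        _ ≤ C + ‖(y : U)‖ := h4
    have hx0 : ‖(x : U)‖ = 0 := by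
      by_contra h
      have hpos : 0 < ‖(x : U)‖ := lt_of_le_of_ne (norm_nonneg _) (Ne.symm h)
      obtain ⟨n, hn⟩ := exists_nat_gt ((C + ‖(y : U)‖) / ‖(x : U)‖)
      have := hnorm n
      have h5 : (C + ‖(y : U)‖) / ‖(x : U)‖ < (n : ℝ) := hn
      rw [div_lt_iff₀ hpos] at h5
      linarith
    exact Subtype.ext (norm_eq_zero.mp hx0)
  -- the kernel and range of ψ - 1 span V
  have hsup : LinearMap.ker (ψ - LinearMap.id) ⊔ LinearMap.range (ψ - LinearMap.id) = ⊤ := by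
    apply Submodule.eq_top_of_finrank_eq
    have h1 := Submodule.finrank_sup_add_finrank_inf_eq (LinearMap.ker (ψ - LinearMap.id))
      (LinearMap.range (ψ - LinearMap.id))
    rw [hinf, finrank_bot, add_zero] at h1
    have h2 := LinearMap.finrank_range_add_finrank_ker (ψ - LinearMap.id)
    omega
  -- decompose v
  have hvV : v ∈ V := Submodule.subset_span ⟨0, by simp⟩
  have hvtop : (⟨v, hvV⟩ : V) ∈ LinearMap.ker (ψ - LinearMap.id) ⊔
      LinearMap.range (ψ - LinearMap.id) := hsup ▸ Submodule.mem_top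
  obtain ⟨xb, hxbK, r, hrR, hsum⟩ := Submodule.mem_sup.mp hvtop
  obtain ⟨y, hy⟩ := hrR
  have hxbfix : ψ xb = xb := by
    have h := LinearMap.mem_ker.mp hxbK
    rw [LinearMap.sub_apply, LinearMap.id_apply, sub_eq_zero] at h
    exact h
  set xbar : U := (xb : U) with hxbar
  set y0 : U := (y : U) with hy0
  have hfix : φ xbar = xbar := by
    have := hψcoe xb
    rw [hxbfix] at this
    exact this.symm
  have hv : v = xbar + (φ y0 - y0) := by
    have hcoe : (xb : U) + (r : U) = v := by
      have h := congrArg (Subtype.val) hsum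
      simpa using h
    have hrcoe : (r : U) = φ y0 - y0 := by
      rw [← hy, LinearMap.sub_apply, LinearMap.id_apply]
      push_cast
      rfl
    rw [← hcoe, hrcoe]
  have hfixpow : ∀ m : ℕ, (φ ^ m) xbar = xbar := by
    intro m; induction m with
    | zero => simp
    | succ n ih => rw [pow_succ', ContinuousLinearMap.mul_apply, ih, hfix]
  have hpt : ∀ m : ℕ, (φ ^ m) v = xbar + ((φ ^ (m + 1)) y0 - (φ ^ m) y0) := by
    intro m
    rw [hv, map_add, map_sub, hfixpow, ← ContinuousLinearMap.mul_apply, ← pow_succ]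
  have hsumf : ∀ t : ℕ, ∑ m ∈ Finset.Icc 1 t, (φ ^ m) v
      = t • xbar + ((φ ^ (t + 1)) y0 - φ y0) := by
    intro t; induction t with
    | zero => simp
    | succ n ih =>
      rw [Finset.sum_Icc_succ_top (Nat.succ_le_succ (Nat.zero_le n)), ih, hpt (n + 1),
        succ_nsmul]
      abel
  obtain ⟨Cy, hCy⟩ := hb y0 y.2
  have h0 : Tendsto (fun t : ℕ => (t : ℝ)⁻¹ • ((φ ^ (t + 1)) y0 - φ y0)) atTop (nhds 0) := by
    have hg : Tendsto (fun t : ℕ => (t : ℝ)⁻¹ * (Cy + ‖φ y0‖)) atTop (nhds 0) := by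
      have h := (tendsto_inv_atTop_zero.comp tendsto_natCast_atTop_atTop).mul_const
        (Cy + ‖φ y0‖)
      simpa using h
    refine squeeze_zero_norm (fun t => ?_) hg
    · 
      rw [norm_smul, norm_inv, Real.norm_natCast]
      refine mul_le_mul_of_nonneg_left ?_ (by positivity)
      calc ‖(φ ^ (t + 1)) y0 - φ y0‖ ≤ ‖(φ ^ (t + 1)) y0‖ + ‖φ y0‖ := norm_sub_le _ _
        _ ≤ Cy + ‖φ y0‖ := add_le_add_left (hCy (t + 1)) _
  have hten : Tendsto (fun t : ℕ => (t : ℝ)⁻¹ • ∑ m ∈ Finset.Icc 1 t, (φ ^ m) v) atTop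
      (nhds xbar) := by
    have heq : (fun t : ℕ => xbar + (t : ℝ)⁻¹ • ((φ ^ (t + 1)) y0 - φ y0)) =ᶠ[atTop]
        (fun t : ℕ => (t : ℝ)⁻¹ • ∑ m ∈ Finset.Icc 1 t, (φ ^ m) v) := by
      filter_upwards [eventually_ge_atTop 1] with t ht
      rw [hsumf, smul_add]
      congr 1
      rw [← Nat.cast_smul_eq_nsmul ℝ t xbar, smul_smul,
        inv_mul_cancel₀ (Nat.cast_ne_zero.mpr (by omega)), one_smul]
    have h1 : Tendsto (fun t : ℕ => xbar + (t : ℝ)⁻¹ • ((φ ^ (t + 1)) y0 - φ y0)) atTop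
        (nhds (xbar + 0)) := (tendsto_const_nhds (x := xbar)).add h0
    rw [add_zero] at h1
    exact Tendsto.congr' heq h1
  refine ⟨xbar, hten, hfix, fun h => ?_⟩
  by_contra hne
  exact h ⟨xbar, xb.2, hne, hfix⟩
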